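/- If states q, q' of two finite iCGS satisfy the same A-formulas of ATL* under the objective imperfect-information memoryless semantics, then for every uniform strategy σ_A for A in G there exists a uniform strategy σ'_A in G' such that every successor of q' under σ'_A is related by objective A-equivalence to some successor of q under σ_A, i.e. succ(q', σ'_A) ⊆ { s' | ∃ s ∈ succ(q, σ_A), s ≡^obj_A s' }. -/

import Mathlib

/-- An imperfect-information concurrent game structure (iCGS), given as raw data;
the defining axioms are collected in `iCGS.Valid`. -/
structure iCGS (Ag AP S Act : Type) where
  init : S
  indist : Ag → S → S → Prop
  protocol : Ag → S → Set Act
  trans : S → (Ag → Act) → S → Prop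
  label : S → Set AP

namespace iCGS

variable {Ag AP S S' Act Act' : Type}

/-- The axioms of an iCGS. -/
def Valid (G : iCGS Ag AP S Act) : Prop :=
  (∀ i, Equivalence (G.indist i)) ∧
  (∀ i s, (G.protocol i s).Nonempty) ∧
  (∀ i s s', G.indist i s s' → G.protocol i s = G.protocol i s') ∧
  (∀ s a, (∃ s', G.trans s a s') ↔ ∀ i, a i ∈ G.protocol i s)

/-- Common-knowledge reachability for coalition `A`:
reflexive-transitive closure of the union of the `∼ᵢ`, `i ∈ A`. -/
def ck (G : iCGS Ag AP S Act) (A : Set Ag) : S → S → Prop :=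
  Relation.ReflTransGen (fun s s' => ∃ i ∈ A, G.indist i s s')

/-- Common-knowledge neighbourhood `C_A(q)`. -/
def CKN (G : iCGS Ag AP S Act) (A : Set Ag) (q : S) : Set S := {r | G.ck A q r}

/-- "Everybody knows" neighbourhood `E_A(q)`. -/
def EKN (G : iCGS Ag AP S Act) (A : Set Ag) (q : S) : Set S :=
  {r | ∃ i ∈ A, G.indist i q r}

/-- `σ` is a partial uniform strategy for coalition `A` with domain `Q`. -/
def IsPStrat (G : iCGS Ag AP S Act) (A : Set Ag) (Q : Set S) (σ : Ag → S → Act) : Prop :=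
  (∀ i ∈ A, ∀ s ∈ Q, σ i s ∈ G.protocol i s) ∧
  (∀ i ∈ A, ∀ s ∈ Q, ∀ t ∈ Q, G.indist i s t → σ i s = σ i t)

/-- `σ` is a (total) uniform memoryless strategy for coalition `A`. -/
def IsStrat (G : iCGS Ag AP S Act) (A : Set Ag) (σ : Ag → S → Act) : Prop :=
  G.IsPStrat A Set.univ σ

/-- Successors of `s` under joint actions compatible with `σ` on coalition `A`. -/
def succ (G : iCGS Ag AP S Act) (A : Set Ag) (σ : Ag → S → Act) (s : S) : Set S :=
  {t | ∃ a : Ag → Act, (∀ i ∈ A, a i = σ i s) ∧ G.trans s a t}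

/-- Objective outcome set of strategy `σ` at `q` (runs as infinite state sequences). -/
def OutObj (G : iCGS Ag AP S Act) (A : Set Ag) (σ : Ag → S → Act) (q : S) :
    Set (ℕ → S) :=
  {lam | lam 0 = q ∧ ∀ j, lam (j + 1) ∈ G.succ A σ (lam j)}

/-- Subjective outcome set: union of objective outcomes over states indistinguishable
from `q` for some member of the coalition. -/
def OutSubj (G : iCGS Ag AP S Act) (A : Set Ag) (σ : Ag → S → Act) (q : S) :
    Set (ℕ → S) :=
  {lam | ∃ i ∈ A, ∃ r, G.indist i q r ∧ lam ∈ G.OutObj A σ r}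

/-- Outcome set: subjective (`x = true`) or objective (`x = false`).
(For a nonempty coalition the subjective case coincides with the union of
objective outcomes over indistinguishable states, by reflexivity; for the
empty coalition it degenerates to the objective case.) -/
def Out (G : iCGS Ag AP S Act) (x : Bool) (A : Set Ag) (σ : Ag → S → Act) (q : S) :
    Set (ℕ → S) :=
  if x then G.OutObj A σ q ∪ G.OutSubj A σ q else G.OutObj A σ q

/-- `R` is a simulation for coalition `A` from `G` to `G'` (Def. of simulation):
existence of a strategy simulator over common-knowledge neighbourhoods with
(a) atom agreement, (b) epistemic back-condition, (c) strategy transfer, and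
(2) injectivity modulo common-knowledge neighbourhoods. -/
def IsSimulation (G : iCGS Ag AP S Act) (G' : iCGS Ag AP S' Act') (A : Set Ag)
    (R : S → S' → Prop) : Prop :=
  (∃ ST : Set S → Set S' → (Ag → S → Act) → (Ag → S' → Act'),
    ∀ q q', R q q' →
      (∀ σ, G.IsPStrat A (G.CKN A q) σ →
        G'.IsPStrat A (G'.CKN A q') (ST (G.CKN A q) (G'.CKN A q') σ)) ∧
      (∀ r ∈ G.CKN A q, ∀ r' ∈ G'.CKN A q', R r r' →
        ∀ σ, G.IsPStrat A (G.CKN A q) σ →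
          ∀ s' ∈ G'.succ A (ST (G.CKN A q) (G'.CKN A q') σ) r',
            ∃ s ∈ G.succ A σ r, R s s')) ∧
  (∀ q q', R q q' → G.label q = G'.label q') ∧
  (∀ q q', R q q' → ∀ i ∈ A, ∀ r', G'.indist i q' r' →
    ∃ r, G.indist i q r ∧ R r r') ∧
  (∀ q₁ q₂ q', R q₁ q' → R q₂ q' → G.CKN A q₁ = G.CKN A q₂)

/-- `R` is a bisimulation for `A` iff both `R` and its converse are `A`-simulations. -/
def IsBisimulation (G : iCGS Ag AP S Act) (G' : iCGS Ag AP S' Act') (A : Set Ag)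
    (R : S → S' → Prop) : Prop :=
  G.IsSimulation G' A R ∧ G'.IsSimulation G A (fun q' q => R q q')

end iCGS
mutual
/-- State formulas of ATL*. -/
inductive SF (AP Ag : Type) : Type where
  | atom : AP → SF AP Ag
  | neg : SF AP Ag → SF AP Ag
  | imp : SF AP Ag → SF AP Ag → SF AP Ag
  | coal : Set Ag → PF AP Ag → SF AP Ag
/-- Path formulas of ATL*. -/
inductive PF (AP Ag : Type) : Type where
  | of : SF AP Ag → PF AP Ag
  | neg : PF AP Ag → PF AP Ag
  | imp : PF AP Ag → PF AP Ag → PF AP Ag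
  | next : PF AP Ag → PF AP Ag
  | untl : PF AP Ag → PF AP Ag → PF AP Ag
end

variable {Ag AP S Act : Type}

mutual
/-- Satisfaction of ATL* state formulas; `x = true` is the subjective,
`x = false` the objective imperfect-information memoryless semantics. -/
def SSat (G : iCGS Ag AP S Act) (x : Bool) : S → SF AP Ag → Prop
  | s, .atom p => p ∈ G.label s
  | s, .neg φ => ¬ SSat G x s φ
  | s, .imp φ ψ => SSat G x s φ → SSat G x s ψ
  | s, .coal A ψ =>
      ∃ σ, G.IsStrat A σ ∧ ∀ lam ∈ G.Out x A σ s, PSat G x lam ψ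
/-- Satisfaction of ATL* path formulas on runs. -/
def PSat (G : iCGS Ag AP S Act) (x : Bool) : (ℕ → S) → PF AP Ag → Prop
  | lam, .of φ => SSat G x (lam 0) φ
  | lam, .neg ψ => ¬ PSat G x lam ψ
  | lam, .imp ψ χ => PSat G x lam ψ → PSat G x lam χ
  | lam, .next ψ => PSat G x (fun n => lam (n + 1)) ψ
  | lam, .untl ψ χ => ∃ j, PSat G x (fun n => lam (n + j)) χ ∧
      ∀ k < j, PSat G x (fun n => lam (n + k)) ψ
end

mutual
/-- `φ` is an `A`-formula: `A` is the only coalition occurring in it. -/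
def SOnly (A : Set Ag) : SF AP Ag → Prop
  | .atom _ => True
  | .neg φ => SOnly A φ
  | .imp φ ψ => SOnly A φ ∧ SOnly A ψ
  | .coal B ψ => B = A ∧ POnly A ψ
def POnly (A : Set Ag) : PF AP Ag → Prop
  | .of φ => SOnly A φ
  | .neg ψ => POnly A ψ
  | .imp ψ χ => POnly A ψ ∧ POnly A χ
  | .next ψ => POnly A ψ
  | .untl ψ χ => POnly A ψ ∧ POnly A χ
end

section Auxiliary

open Classical

mutual
/-- If there are no atoms there are no state formulas. -/
def sfElim {AP Ag : Type} (h : AP → False) : SF AP Ag → False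
  | .atom p => h p
  | .neg φ => sfElim h φ
  | .imp φ _ => sfElim h φ
  | .coal _ ψ => pfElim h ψ
/-- If there are no atoms there are no path formulas. -/
def pfElim {AP Ag : Type} (h : AP → False) : PF AP Ag → False
  | .of φ => sfElim h φ
  | .neg ψ => pfElim h ψ
  | .imp ψ _ => pfElim h ψ
  | .next ψ => pfElim h ψ
  | .untl ψ _ => pfElim h ψ
end

/-- Every valid iCGS admits a (total) uniform memoryless strategy. -/
theorem exists_uniform_strategy {Ag AP S Act : Type} (G : iCGS Ag AP S Act)
    (hG : G.Valid) (A : Set Ag) : ∃ σ : Ag → S → Act, G.IsStrat A σ := by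
  classical
  have hEq := hG.1
  have hNe := hG.2.1
  have hProt := hG.2.2.1
  refine ⟨fun i s =>
    (hNe i (@Quotient.out S ⟨G.indist i, hEq i⟩ (@Quotient.mk S ⟨G.indist i, hEq i⟩ s))).choose,
    ?_, ?_⟩
  · intro i _ s _
    set st : Setoid S := ⟨G.indist i, hEq i⟩
    have h1 : G.indist i (@Quotient.out S st (@Quotient.mk S st s)) s := by
      have := @Quotient.out_eq S st (@Quotient.mk S st s)
      exact Quotient.exact this
    show (hNe i (@Quotient.out S st (@Quotient.mk S st s))).choose ∈ G.protocol i s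
    rw [← hProt i _ s h1]
    exact (hNe i _).choose_spec
  · intro i _ s _ t _ hst
    set st : Setoid S := ⟨G.indist i, hEq i⟩
    have : (@Quotient.mk S st s) = (@Quotient.mk S st t) := Quotient.sound hst
    exact congrArg (fun x => (hNe i (@Quotient.out S st x)).choose) this

/-- Under a uniform strategy every state of a valid iCGS has a successor. -/
theorem succ_nonempty' {Ag AP S Act : Type} (G : iCGS Ag AP S Act) (hG : G.Valid)
    (A : Set Ag) (σ : Ag → S → Act) (hσ : G.IsStrat A σ) (s : S) :
    (G.succ A σ s).Nonempty := by
  classical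
  set a : Ag → Act := fun i => if i ∈ A then σ i s else (hG.2.1 i s).choose with ha
  have hmem : ∀ i, a i ∈ G.protocol i s := by
    intro i
    by_cases hi : i ∈ A
    · simpa [ha, hi] using hσ.1 i hi s (Set.mem_univ s)
    · simpa [ha, hi] using (hG.2.1 i s).choose_spec
  obtain ⟨t, ht⟩ := (hG.2.2.2 s a).mpr hmem
  exact ⟨t, a, fun i hi => if_pos hi, ht⟩

/-- Every successor is the second state of an objective outcome. -/
theorem exists_run {Ag AP S Act : Type} (G : iCGS Ag AP S Act) (hG : G.Valid)
    (A : Set Ag) (σ : Ag → S → Act) (hσ : G.IsStrat A σ) (s t : S)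
    (ht : t ∈ G.succ A σ s) :
    ∃ lam, lam ∈ G.OutObj A σ s ∧ lam 1 = t := by
  classical
  have hne : ∀ x : S, (G.succ A σ x).Nonempty := succ_nonempty' G hG A σ hσ
  set lam : ℕ → S :=
    fun n => Nat.rec s (fun k x => if k = 0 then t else (hne x).choose) n with hlam
  have hstep : ∀ j, lam (j + 1) = if j = 0 then t else (hne (lam j)).choose := fun j => rfl
  have h1 : lam 1 = t := by simpa using hstep 0
  refine ⟨lam, ⟨rfl, ?_⟩, h1⟩
  intro j
  cases j with
  | zero => rw [hstep 0]; exact ht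
  | succ k =>
    rw [hstep (k + 1)]
    simpa using (hne (lam (k + 1))).choose_spec

/-- Conjunction as a derived connective. -/
def myAnd {AP Ag : Type} (φ ψ : SF AP Ag) : SF AP Ag := .neg (.imp φ (.neg ψ))
/-- Disjunction as a derived connective. -/
def myOr {AP Ag : Type} (φ ψ : SF AP Ag) : SF AP Ag := .imp (.neg φ) ψ
/-- Finite conjunction. -/
def bigAnd {AP Ag : Type} (top : SF AP Ag) (l : List (SF AP Ag)) : SF AP Ag :=
  l.foldr myAnd top
/-- Finite disjunction. -/
def bigOr {AP Ag : Type} (bot : SF AP Ag) (l : List (SF AP Ag)) : SF AP Ag :=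
  l.foldr myOr bot

theorem ssat_myAnd {Ag AP S Act : Type} (G : iCGS Ag AP S Act) (x : Bool) (s : S)
    (φ ψ : SF AP Ag) : SSat G x s (myAnd φ ψ) ↔ SSat G x s φ ∧ SSat G x s ψ := by
  simp [myAnd, SSat]

theorem ssat_myOr {Ag AP S Act : Type} (G : iCGS Ag AP S Act) (x : Bool) (s : S)
    (φ ψ : SF AP Ag) : SSat G x s (myOr φ ψ) ↔ SSat G x s φ ∨ SSat G x s ψ := by
  simp [myOr, SSat]; tauto

theorem sonly_myAnd {Ag AP : Type} (A : Set Ag) (φ ψ : SF AP Ag) :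
    SOnly A (myAnd φ ψ) ↔ SOnly A φ ∧ SOnly A ψ := by simp [myAnd, SOnly]

theorem sonly_myOr {Ag AP : Type} (A : Set Ag) (φ ψ : SF AP Ag) :
    SOnly A (myOr φ ψ) ↔ SOnly A φ ∧ SOnly A ψ := by simp [myOr, SOnly]

theorem ssat_bigAnd {Ag AP S Act : Type} (G : iCGS Ag AP S Act) (x : Bool) (s : S)
    (top : SF AP Ag) (l : List (SF AP Ag)) :
    SSat G x s (bigAnd top l) ↔ SSat G x s top ∧ ∀ φ ∈ l, SSat G x s φ := by
  induction l with
  | nil => simp [bigAnd]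
  | cons a l ih =>
    simp only [bigAnd, List.foldr_cons, ssat_myAnd, List.mem_cons]
    rw [show List.foldr myAnd top l = bigAnd top l from rfl, ih]
    constructor
    · rintro ⟨h1, h2, h3⟩
      exact ⟨h2, fun φ hφ => hφ.elim (fun e => e ▸ h1) (h3 φ)⟩
    · rintro ⟨h1, h2⟩
      exact ⟨h2 a (Or.inl rfl), h1, fun φ hφ => h2 φ (Or.inr hφ)⟩

theorem ssat_bigOr {Ag AP S Act : Type} (G : iCGS Ag AP S Act) (x : Bool) (s : S)
    (bot : SF AP Ag) (l : List (SF AP Ag)) :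
    SSat G x s (bigOr bot l) ↔ SSat G x s bot ∨ ∃ φ ∈ l, SSat G x s φ := by
  induction l with
  | nil => simp [bigOr]
  | cons a l ih =>
    simp only [bigOr, List.foldr_cons, ssat_myOr, List.mem_cons]
    rw [show List.foldr myOr bot l = bigOr bot l from rfl, ih]
    constructor
    · rintro (h | h | h)
      · exact Or.inr ⟨a, Or.inl rfl, h⟩
      · exact Or.inl h
      · obtain ⟨φ, h1, h2⟩ := h
        exact Or.inr ⟨φ, Or.inr h1, h2⟩
    · rintro (h | ⟨φ, h1 | h1, h2⟩)
      · exact Or.inr (Or.inl h)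
      · exact Or.inl (h1 ▸ h2)
      · exact Or.inr (Or.inr ⟨φ, h1, h2⟩)

theorem sonly_bigAnd {Ag AP : Type} (A : Set Ag) (top : SF AP Ag)
    (l : List (SF AP Ag)) (htop : SOnly A top) (hl : ∀ φ ∈ l, SOnly A φ) :
    SOnly A (bigAnd top l) := by
  induction l with
  | nil => simpa [bigAnd] using htop
  | cons a l ih =>
    simp only [bigAnd, List.foldr_cons, sonly_myAnd]
    exact ⟨hl a List.mem_cons_self,
      ih (fun φ hφ => hl φ (List.mem_cons_of_mem a hφ))⟩

theorem sonly_bigOr {Ag AP : Type} (A : Set Ag) (bot : SF AP Ag)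
    (l : List (SF AP Ag)) (hbot : SOnly A bot) (hl : ∀ φ ∈ l, SOnly A φ) :
    SOnly A (bigOr bot l) := by
  induction l with
  | nil => simpa [bigOr] using hbot
  | cons a l ih =>
    simp only [bigOr, List.foldr_cons, sonly_myOr]
    exact ⟨hl a List.mem_cons_self,
      ih (fun φ hφ => hl φ (List.mem_cons_of_mem a hφ))⟩



theorem ssat_coal_obj {Ag AP S Act : Type} (G : iCGS Ag AP S Act) (A : Set Ag) (s : S)
    (ψ : PF AP Ag) : SSat G false s (.coal A ψ) ↔
      ∃ σ, G.IsStrat A σ ∧ ∀ lam ∈ G.OutObj A σ s, PSat G false lam ψ := by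
  simp [SSat, iCGS.Out]

theorem psat_next_of {Ag AP S Act : Type} (G : iCGS Ag AP S Act) (lam : ℕ → S)
    (φ : SF AP Ag) : PSat G false lam (.next (.of φ)) ↔ SSat G false (lam 1) φ := by
  simp [PSat, SSat]

end Auxiliary
/-- if `q` and `q'` satisfy the same `A`-formulas of ATL* under the
objective semantics (finite models), then for every uniform strategy `σ` of `A` in
`G` there is a uniform strategy `σ'` in `G'` such that every successor of `q'` under
`σ'` is objectively `A`-equivalent to some successor of `q` under `σ`. -/
theorem objective_equivalence_successor_condition
    {Ag AP S S' Act Act' : Type} [Fintype S] [Fintype S'] [Fintype Act] [Fintype Act']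
    (G : iCGS Ag AP S Act) (G' : iCGS Ag AP S' Act')
    (hG : G.Valid) (hG' : G'.Valid) (A : Set Ag) (q : S) (q' : S')
    (h : ∀ φ : SF AP Ag, SOnly A φ → (SSat G false q φ ↔ SSat G' false q' φ))
    (σ : Ag → S → Act) (hσ : G.IsStrat A σ) :
    ∃ σ' : Ag → S' → Act', G'.IsStrat A σ' ∧
      G'.succ A σ' q' ⊆
        {s' | ∃ s ∈ G.succ A σ q,
          ∀ φ : SF AP Ag, SOnly A φ → (SSat G false s φ ↔ SSat G' false s' φ)} := by
  classical
  by_cases hAP : Nonempty AP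
  case neg =>
    obtain ⟨σ', hσ'⟩ := exists_uniform_strategy G' hG' A
    obtain ⟨s, hs⟩ := succ_nonempty' G hG A σ hσ q
    exact ⟨σ', hσ', fun t' _ =>
      ⟨s, hs, fun φ _ => (sfElim (fun p => hAP ⟨p⟩) φ).elim⟩⟩
  case pos =>
  obtain ⟨p0⟩ := hAP
  set top : SF AP Ag := .imp (.atom p0) (.atom p0) with htopdef
  set bot : SF AP Ag := .neg top with hbotdef
  have htopG : ∀ s : S, SSat G false s top := by intro s; simp [htopdef, SSat]
  have htopG' : ∀ s' : S', SSat G' false s' top := by intro s'; simp [htopdef, SSat]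
  have hbotG' : ∀ s' : S', ¬ SSat G' false s' bot := by
    intro s' hb
    simp [hbotdef, htopdef, SSat] at hb
  have htopOnly : SOnly A top := by simp [htopdef, SOnly]
  have hbotOnly : SOnly A bot := by simp [hbotdef, htopdef, SOnly]
  set Eqv : S → S' → Prop := fun s s' =>
    ∀ φ : SF AP Ag, SOnly A φ → (SSat G false s φ ↔ SSat G' false s' φ) with hEqvdef
  have hdelta : ∀ (s : S) (s' : S'), ∃ φ : SF AP Ag, SOnly A φ ∧ SSat G false s φ ∧
      (¬ Eqv s s' → ¬ SSat G' false s' φ) := by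
    intro s s'
    by_cases he : Eqv s s'
    · exact ⟨top, htopOnly, htopG s, fun hne => absurd he hne⟩
    · simp only [hEqvdef] at he
      push_neg at he
      obtain ⟨φ, hφ, hne⟩ := he
      rcases hne with ⟨hP, hQ⟩ | ⟨hP, hQ⟩
      · exact ⟨φ, hφ, hP, fun _ => hQ⟩
      · refine ⟨.neg φ, ?_, ?_, fun _ => ?_⟩
        · simpa [SOnly] using hφ
        · simpa [SSat] using hP
        · simp [SSat, hQ]
  choose δ hδOnly hδSelf hδNot using hdelta
  set χ : S → SF AP Ag := fun s => bigAnd top ((Finset.univ.toList (α := S')).map (δ s))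
    with hχdef
  have hχOnly : ∀ s, SOnly A (χ s) := by
    intro s
    refine sonly_bigAnd A top _ htopOnly ?_
    intro φ hφ
    obtain ⟨s', _, rfl⟩ := List.mem_map.mp hφ
    exact hδOnly s s'
  have hχSelf : ∀ s, SSat G false s (χ s) := by
    intro s
    rw [hχdef, ssat_bigAnd]
    refine ⟨htopG s, ?_⟩
    intro φ hφ
    obtain ⟨s', _, rfl⟩ := List.mem_map.mp hφ
    exact hδSelf s s'
  have hχForce : ∀ (s : S) (t' : S'), SSat G' false t' (χ s) → Eqv s t' := by
    intro s t' hsat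
    by_contra hne
    rw [hχdef, ssat_bigAnd] at hsat
    refine hδNot s t' hne (hsat.2 (δ s t') ?_)
    exact List.mem_map.mpr ⟨t', Finset.mem_toList.mpr (Finset.mem_univ t'), rfl⟩
  set Ψ : SF AP Ag := bigOr bot ((Finset.univ.toList (α := S)).map
      (fun s => if s ∈ G.succ A σ q then χ s else bot)) with hΨdef
  have hΨOnly : SOnly A Ψ := by
    refine sonly_bigOr A bot _ hbotOnly ?_
    intro φ hφ
    obtain ⟨s, _, rfl⟩ := List.mem_map.mp hφ
    by_cases hs : s ∈ G.succ A σ q <;> simp [hs, hχOnly, hbotOnly]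
  set Φ : SF AP Ag := .coal A (.next (.of Ψ)) with hΦdef
  have hΦOnly : SOnly A Φ := by
    rw [hΦdef]
    show A = A ∧ POnly A _
    exact ⟨rfl, hΨOnly⟩
  have hq : SSat G false q Φ := by
    rw [hΦdef, ssat_coal_obj]
    refine ⟨σ, hσ, ?_⟩
    intro lam hlam
    rw [psat_next_of]
    have h1 : lam 1 ∈ G.succ A σ q := by
      have := hlam.2 0
      rwa [hlam.1] at this
    rw [hΨdef, ssat_bigOr]
    right
    refine ⟨if lam 1 ∈ G.succ A σ q then χ (lam 1) else bot, ?_, ?_⟩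
    · exact List.mem_map.mpr ⟨lam 1, Finset.mem_toList.mpr (Finset.mem_univ _), rfl⟩
    · rw [if_pos h1]
      exact hχSelf (lam 1)
  have hq' : SSat G' false q' Φ := (h Φ hΦOnly).mp hq
  rw [hΦdef, ssat_coal_obj] at hq'
  obtain ⟨σ', hσ', hout⟩ := hq'
  refine ⟨σ', hσ', ?_⟩
  intro t' ht'
  obtain ⟨lam, hlam, h1⟩ := exists_run G' hG' A σ' hσ' q' t' ht'
  have hsat := hout lam hlam
  rw [psat_next_of, h1, hΨdef, ssat_bigOr] at hsat
  rcases hsat with hb | ⟨φ, hφmem, hφsat⟩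
  · exact absurd hb (hbotG' t')
  · obtain ⟨s, _, rfl⟩ := List.mem_map.mp hφmem
    by_cases hs : s ∈ G.succ A σ q
    · rw [if_pos hs] at hφsat
      refine ⟨s, hs, ?_⟩
      simpa [hEqvdef] using hχForce s t' hφsat
    · rw [if_neg hs] at hφsat
      exact absurd hφsat (hbotG' t')
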